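/- A skew-symmetric bi-affine bracket [·,·] : A × A → V(A) on an affine space A is completely determined by its affine-linear part: if two skew-symmetric bi-affine brackets have the same affine-linear part [a, ·]_V for every a ∈ A, then they are equal. -/
import Mathlib

/-- A skew-symmetric bi-affine bracket `[·,·] : A × A → V(A)` is completely
determined by its affine-linear part: if two such brackets have the same
affine-linear part `[a,·]_V` for every `a`, then they coincide. -/
theorem skew_biaffine_bracket_determined_by_affine_linear_part
    {K V A : Type*} [Field K] [CharZero K] [AddCommGroup V] [Module K V]
    [Nonempty A] [AddTorsor V A]
    (B B' : A → A → V)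
    -- bi-affinity of `B` (affine in each argument):
    (hB1 : ∀ b : A, ∃ L : V →ₗ[K] V, ∀ (a : A) (u : V), B (u +ᵥ a) b = B a b + L u)
    (hB2 : ∀ a : A, ∃ L : V →ₗ[K] V, ∀ (b : A) (u : V), B a (u +ᵥ b) = B a b + L u)
    -- bi-affinity of `B'`:
    (hB'1 : ∀ b : A, ∃ L : V →ₗ[K] V, ∀ (a : A) (u : V), B' (u +ᵥ a) b = B' a b + L u)
    (hB'2 : ∀ a : A, ∃ L : V →ₗ[K] V, ∀ (b : A) (u : V), B' a (u +ᵥ b) = B' a b + L u)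
    -- skew-symmetry:
    (hBskew : ∀ a b : A, B a b = -B b a)
    (hB'skew : ∀ a b : A, B' a b = -B' b a)
    -- the two brackets have the same affine-linear part:
    (hsame : ∀ (a b : A) (u : V), B a (u +ᵥ b) - B a b = B' a (u +ᵥ b) - B' a b) :
    B = B' := by
  -- The difference D a b := B a b - B' a b is constant in the second argument,
  -- skew-symmetric, and vanishes on the diagonal, hence is zero.
  have hdiag : ∀ a : A, B a a - B' a a = 0 := by
    intro a
    have h1 : B a a = -B a a := hBskew a a
    have h2 : B' a a = -B' a a := hB'skew a a
    have h1' : B a a = 0 := by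
      have : (2 : K) • B a a = 0 := by
        rw [two_smul]
        nth_rewrite 1 [h1]
        exact neg_add_cancel _
      rcases smul_eq_zero.mp this with h | h
      · exact absurd h two_ne_zero
      · exact h
    have h2' : B' a a = 0 := by
      have : (2 : K) • B' a a = 0 := by
        rw [two_smul]
        nth_rewrite 1 [h2]
        exact neg_add_cancel _
      rcases smul_eq_zero.mp this with h | h
      · exact absurd h two_ne_zero
      · exact h
    rw [h1', h2', sub_zero]
  funext a b
  have key := hsame a a (b -ᵥ a)
  rw [vsub_vadd] at key
  have : B a b - B' a b = B a a - B' a a := by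
    linear_combination (norm := abel) key
  rw [hdiag a] at this
  exact sub_eq_zero.mp this
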